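/- arXiv:2005.03829 — 4 statements merged into one kernel-verified Lean document; each statement's English description precedes it below -/
import Mathlib

section
/- Let G be a finite group whose order is divisible by at least two distinct primes, and let x, y ∈ G with {o(x), o(y)} = {p^m, p^n}, where p is a prime and m, n are positive integers with m > n. Then N[x] = N[y] in the order supergraph 𝒮(G) if and only if p^n·q ∉ π_e(G) for every prime q ≠ p. -/
/-- The closed neighborhood of a vertex `x` in a simple graph. -/
def closedNbhd {V : Type*} (Γ : SimpleGraph V) (x : V) : Set V :=
  insert x (Γ.neighborSet x)

/-- `z` strongly resolves `x` and `y` if some shortest path from `z` to `x`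
contains `y`, or some shortest path from `z` to `y` contains `x`. -/
def StronglyResolves {V : Type*} (Γ : SimpleGraph V) (z x y : V) : Prop :=
  (∃ w : Γ.Walk z x, w.IsPath ∧ w.length = Γ.dist z x ∧ y ∈ w.support) ∨
  (∃ w : Γ.Walk z y, w.IsPath ∧ w.length = Γ.dist z y ∧ x ∈ w.support)

/-- `S` is a strong resolving set if every pair of distinct vertices is
strongly resolved by some vertex of `S`. -/
def IsStrongResolvingSet {V : Type*} (Γ : SimpleGraph V) (S : Set V) : Prop :=
  ∀ x y : V, x ≠ y → ∃ z ∈ S, StronglyResolves Γ z x y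

/-- The strong metric dimension: the minimum size of a strong resolving set. -/
noncomputable def sdim {V : Type*} [Fintype V] (Γ : SimpleGraph V) : ℕ :=
  sInf {k | ∃ S : Finset V, S.card = k ∧ IsStrongResolvingSet Γ ↑S}

/-- The equivalence relation `x ≈ y` iff `N[x] = N[y]`. -/
def nbhdSetoid {V : Type*} (Γ : SimpleGraph V) : Setoid V :=
  ⟨fun x y => closedNbhd Γ x = closedNbhd Γ y,
   ⟨fun _ => rfl, Eq.symm, Eq.trans⟩⟩

/-- The reduced graph `ℛ_Γ`: vertices are the `≈`-classes, two distinct classes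
being adjacent iff some (equivalently, any) pair of their members is adjacent in `Γ`. -/
def reducedGraph {V : Type*} (Γ : SimpleGraph V) :
    SimpleGraph (Quotient (nbhdSetoid Γ)) where
  Adj a b := a ≠ b ∧ ∃ x y : V,
    Quotient.mk (nbhdSetoid Γ) x = a ∧ Quotient.mk (nbhdSetoid Γ) y = b ∧ Γ.Adj x y
  symm := by constructor; rintro a b ⟨h, x, y, hx, hy, hadj⟩; exact ⟨h.symm, y, x, hy, hx, hadj.symm⟩
  loopless := by constructor; rintro a ⟨h, -⟩; exact h rfl

/-- The order supergraph `𝒮(G)`: distinct `x, y` are adjacent iff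
`o(x) ∣ o(y)` or `o(y) ∣ o(x)`. -/
def orderSupergraph (G : Type*) [Group G] : SimpleGraph G where
  Adj x y := x ≠ y ∧ (orderOf x ∣ orderOf y ∨ orderOf y ∣ orderOf x)
  symm := by constructor; rintro x y ⟨h, h2⟩; exact ⟨h.symm, h2.symm⟩
  loopless := by constructor; rintro x ⟨h, -⟩; exact h rfl

/-- The enhanced power graph `𝒫_E(G)`: distinct `x, y` are adjacent iff
`⟨x, y⟩` is cyclic. -/
def enhancedPowerGraph (G : Type*) [Group G] : SimpleGraph G where
  Adj x y := x ≠ y ∧ IsCyclic (Subgroup.closure ({x, y} : Set G))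
  symm := by constructor; rintro x y ⟨h, h2⟩; rw [Set.pair_comm] at h2; exact ⟨h.symm, h2⟩
  loopless := by constructor; rintro x ⟨h, -⟩; exact h rfl

/-- The reduced power graph `𝒫_R(G)`: distinct `x, y` are adjacent iff
`⟨x⟩ ⊂ ⟨y⟩` or `⟨y⟩ ⊂ ⟨x⟩`. -/
def reducedPowerGraph (G : Type*) [Group G] : SimpleGraph G where
  Adj x y := Subgroup.zpowers x < Subgroup.zpowers y ∨ Subgroup.zpowers y < Subgroup.zpowers x
  symm := by constructor; rintro x y h; exact h.symm
  loopless := by constructor; rintro x h; rcases h with h | h <;> exact lt_irrefl _ h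

/-- `Ω n`: the number of prime factors of `n` counted with multiplicity. -/
def bigOmega (n : ℕ) : ℕ := n.primeFactorsList.length

/-- A maximal cyclic subgroup: a cyclic subgroup not properly contained in any
cyclic subgroup. -/
def IsMaxCyclic {G : Type*} [Group G] (M : Subgroup G) : Prop :=
  IsCyclic M ∧ ∀ N : Subgroup G, IsCyclic N → M ≤ N → M = N

/-- `ℳ_g`: the set of maximal cyclic subgroups containing `g`. -/
def maxCyclicOn {G : Type*} [Group G] (g : G) : Set (Subgroup G) :=
  {M | IsMaxCyclic M ∧ g ∈ M}


lemma mem_cn {G : Type*} [Group G] (x z : G) :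
    z ∈ closedNbhd (orderSupergraph G) x ↔
      (orderOf x ∣ orderOf z ∨ orderOf z ∣ orderOf x) := by
  simp only [closedNbhd, Set.mem_insert_iff, SimpleGraph.mem_neighborSet]
  constructor
  · rintro (rfl | ⟨-, h⟩)
    · exact Or.inl dvd_rfl
    · exact h
  · intro h
    by_cases hzx : z = x
    · exact Or.inl hzx
    · exact Or.inr ⟨fun e => hzx e.symm, h⟩

lemma key_cn {G : Type*} [Group G] [Fintype G] (x y : G) (p m k : ℕ)
    (hp : p.Prime) (hmk : k < m) (hx : orderOf x = p ^ m) (hy : orderOf y = p ^ k) :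
    closedNbhd (orderSupergraph G) x = closedNbhd (orderSupergraph G) y ↔
      ∀ q : ℕ, q.Prime → q ≠ p → ¬∃ g : G, orderOf g = p ^ k * q := by
  constructor
  · rintro h q hq hqp ⟨g, hg⟩
    have hgY : g ∈ closedNbhd (orderSupergraph G) y := by
      rw [mem_cn, hy, hg]; exact Or.inl ⟨q, rfl⟩
    rw [← h, mem_cn, hx, hg] at hgY
    rcases hgY with h1 | h1
    · have h2 : p ^ (k + 1) ∣ p ^ k * q := dvd_trans (pow_dvd_pow p hmk) h1
      rw [pow_succ] at h2
      have h3 : p ∣ q := (Nat.mul_dvd_mul_iff_left (pow_pos hp.pos k)).mp h2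
      exact hqp ((Nat.prime_dvd_prime_iff_eq hp hq).mp h3).symm
    · have h2 : q ∣ p ^ m := dvd_trans (dvd_mul_left q (p ^ k)) h1
      exact hqp ((Nat.prime_dvd_prime_iff_eq hq hp).mp (hq.dvd_of_dvd_pow h2))
  · intro h
    ext z
    rw [mem_cn, mem_cn, hx, hy]
    have hopos : 0 < orderOf z := orderOf_pos z
    have hpp : p ^ k ∣ orderOf z → ∃ a, orderOf z = p ^ a := by
      intro hdvd
      by_contra hc
      push_neg at hc
      set o := orderOf z with ho
      set v := o.factorization p with hv
      have hco : p ^ v * (o / p ^ v) = o := Nat.ordProj_mul_ordCompl_eq_self o p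
      have h1 : o / p ^ v ≠ 1 := fun h1 => hc v (by rw [← hco, h1, mul_one])
      set q := (o / p ^ v).minFac with hq
      have hqprime : q.Prime := Nat.minFac_prime h1
      have hqdvd : q ∣ o / p ^ v := Nat.minFac_dvd _
      have hqp : q ≠ p := by
        intro e
        have h5 : p ∣ o / p ^ v := by rwa [e] at hqdvd
        exact Nat.not_dvd_ordCompl hp hopos.ne' h5
      have hcop : Nat.Coprime (p ^ k) q :=
        Nat.Coprime.pow_left k ((Nat.coprime_primes hp hqprime).mpr (Ne.symm hqp))
      have hdvd2 : p ^ k * q ∣ o :=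
        hcop.mul_dvd_of_dvd_of_dvd hdvd (hqdvd.trans (Nat.ordCompl_dvd o p))
      exact h q hqprime hqp
        ⟨z ^ (o / (p ^ k * q)), orderOf_pow_orderOf_div hopos.ne' hdvd2⟩
    constructor
    · rintro (h1 | h1)
      · exact Or.inl ((pow_dvd_pow p hmk.le).trans h1)
      · obtain ⟨a, ham, hoe⟩ := (Nat.dvd_prime_pow hp).mp h1
        by_cases hak : a ≤ k
        · exact Or.inr (hoe ▸ pow_dvd_pow p hak)
        · exact Or.inl (hoe ▸ pow_dvd_pow p (le_of_not_ge hak))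
    · rintro (h1 | h1)
      · obtain ⟨a, hoe⟩ := hpp h1
        by_cases ham : a ≤ m
        · exact Or.inr (hoe ▸ pow_dvd_pow p ham)
        · exact Or.inl (hoe ▸ pow_dvd_pow p (le_of_not_ge ham))
      · exact Or.inr (h1.trans (pow_dvd_pow p hmk.le))

/-- Corollary 3.6: for elements of prime power orders `p^m, p^k` with `m > k ≥ 1`,
`N[x] = N[y]` in `𝒮(G)` iff `p^k·q ∉ π_e(G)` for every prime `q ≠ p`. -/
theorem closedNbhd_eq_iff_primePowers_orderSupergraph (G : Type*) [Group G] [Fintype G]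
    (hG : ∃ r s : ℕ, r.Prime ∧ s.Prime ∧ r ≠ s ∧ r ∣ Fintype.card G ∧ s ∣ Fintype.card G)
    (x y : G) (p m k : ℕ) (hp : p.Prime) (hk : 0 < k) (hmk : k < m)
    (horders : ({orderOf x, orderOf y} : Set ℕ) = {p ^ m, p ^ k}) :
    closedNbhd (orderSupergraph G) x = closedNbhd (orderSupergraph G) y ↔
      ∀ q : ℕ, q.Prime → q ≠ p → ¬∃ g : G, orderOf g = p ^ k * q := by
  have hne : p ^ m ≠ p ^ k := fun e =>
    hmk.ne' (Nat.pow_right_injective hp.two_le e)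
  rcases Set.pair_eq_pair_iff.mp horders with ⟨h1, h2⟩ | ⟨h1, h2⟩
  · exact key_cn x y p m k hp hmk h1 h2
  · rw [eq_comm]
    exact key_cn y x p m k hp hmk h2 h1
end

section
/- Let G be a finite group. If C is a clique of the reduced graph ℛ_{𝒮(G)} of the order supergraph of G, then C is a proper order chain of G; that is, the elements of C can be listed as a_1, a_2, …, a_k so that o(a_1) ∣ o(a_2) ∣ ⋯ ∣ o(a_k) and o(a_i) ≠ o(a_j) for all i ≠ j. -/
lemma closedNbhd_eq_of_orderOf_eq {G : Type*} [Group G] {x y : G}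
    (h : orderOf x = orderOf y) :
    closedNbhd (orderSupergraph G) x = closedNbhd (orderSupergraph G) y := by
  have key : ∀ z w : G, z ∈ closedNbhd (orderSupergraph G) w ↔
      (orderOf w ∣ orderOf z ∨ orderOf z ∣ orderOf w) := by
    intro z w
    simp only [closedNbhd, Set.mem_insert_iff, SimpleGraph.mem_neighborSet,
      orderSupergraph]
    constructor
    · rintro (rfl | ⟨_, h2⟩)
      · exact Or.inl dvd_rfl
      · exact h2
    · intro h2
      by_cases hz : z = w
      · exact Or.inl hz
      · exact Or.inr ⟨Ne.symm hz, h2⟩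
  ext z
  rw [key, key, h]

lemma aux_sort {G : Type*} [Group G] [Fintype G] :
    ∀ n (C : Finset G), C.card = n →
    (∀ x ∈ C, ∀ y ∈ C, x ≠ y → (orderOf x ∣ orderOf y ∨ orderOf y ∣ orderOf x)) →
    (∀ x ∈ C, ∀ y ∈ C, x ≠ y → orderOf x ≠ orderOf y) →
    ∃ l : List G, l.Nodup ∧ (∀ x, x ∈ l ↔ x ∈ C) ∧
      l.Pairwise (fun a b => orderOf a ∣ orderOf b) := by
  intro n
  induction n with
  | zero =>
    intro C hc _ _
    refine ⟨[], List.nodup_nil, ?_, List.Pairwise.nil⟩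
    intro x
    simp [Finset.card_eq_zero.mp hc]
  | succ n ih =>
    intro C hc hdvd hne
    classical
    have hne' : C.Nonempty := Finset.card_pos.mp (by omega)
    obtain ⟨m, hm, hmin⟩ := Finset.exists_min_image C orderOf hne'
    have hdvdall : ∀ x ∈ C, orderOf m ∣ orderOf x := by
      intro x hx
      by_cases hxm : x = m
      · subst hxm; exact dvd_rfl
      · rcases hdvd x hx m hm hxm with h | h
        · exact absurd (le_antisymm (Nat.le_of_dvd (orderOf_pos m) h) (hmin x hx))
            (hne x hx m hm hxm)
        · exact h
    obtain ⟨l, hnod, hmem, hpw⟩ := ih (C.erase m)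
      (by rw [Finset.card_erase_of_mem hm, hc]; rfl)
      (fun x hx y hy => hdvd x (Finset.mem_of_mem_erase hx) y (Finset.mem_of_mem_erase hy))
      (fun x hx y hy => hne x (Finset.mem_of_mem_erase hx) y (Finset.mem_of_mem_erase hy))
    refine ⟨m :: l, ?_, ?_, ?_⟩
    · exact List.nodup_cons.mpr ⟨fun h => (Finset.notMem_erase m C) ((hmem m).mp h), hnod⟩
    · intro x
      simp only [List.mem_cons, hmem, Finset.mem_erase]
      constructor
      · rintro (rfl | ⟨_, h⟩)
        · exact hm
        · exact h
      · intro hx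
        by_cases hxm : x = m
        · exact Or.inl hxm
        · exact Or.inr ⟨hxm, hx⟩
    · refine List.pairwise_cons.mpr ⟨?_, hpw⟩
      intro b hb
      exact hdvdall b (Finset.mem_of_mem_erase ((hmem b).mp hb))

/-- Lemma 3.7: a clique of the reduced graph `ℛ_{𝒮(G)}` (a set of pairwise adjacent
vertices with pairwise distinct closed neighborhoods) is a proper order chain of `G`. -/
theorem reduced_clique_isProperOrderChain (G : Type*) [Group G] [Fintype G]
    (C : Finset G)
    (hadj : ∀ x ∈ C, ∀ y ∈ C, x ≠ y → (orderSupergraph G).Adj x y)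
    (hcls : ∀ x ∈ C, ∀ y ∈ C, x ≠ y →
      closedNbhd (orderSupergraph G) x ≠ closedNbhd (orderSupergraph G) y) :
    ∃ l : List G, l.Nodup ∧ (∀ x : G, x ∈ l ↔ x ∈ C) ∧
      (l.map orderOf).Chain' (· ∣ ·) ∧ (l.map orderOf).Nodup := by
  have hord : ∀ x ∈ C, ∀ y ∈ C, x ≠ y → orderOf x ≠ orderOf y :=
    fun x hx y hy hxy h => hcls x hx y hy hxy (closedNbhd_eq_of_orderOf_eq h)
  obtain ⟨l, hnod, hmem, hpw⟩ := aux_sort C.card C rfl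
    (fun x hx y hy hxy => (hadj x hx y hy hxy).2) hord
  refine ⟨l, hnod, hmem, ?_, ?_⟩
  · exact (List.pairwise_map.mpr hpw).isChain
  · refine hnod.map_on ?_
    intro x hx y hy h
    by_contra hxy
    exact hord x ((hmem x).mp hx) y ((hmem y).mp hy) hxy h
end

section
/- Let G be a non-cyclic abelian p-group of order n and exponent p^m, where p is a prime. Then sdim(𝒫_E(G)) = n − m − 1. -/
open Subgroup

/-- In a finite cyclic group, order divisibility gives membership of cyclic subgroups. -/
lemma mem_zpowers_of_orderOf_dvd {α : Type*} [Group α] [Finite α] [IsCyclic α]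
    {a b : α} (h : orderOf a ∣ orderOf b) : a ∈ Subgroup.zpowers b := by
  classical
  cases nonempty_fintype α
  have hb : 0 < orderOf b := orderOf_pos b
  have hle : ({x : α | x ^ orderOf b = 1} : Finset α).card ≤ orderOf b :=
    IsCyclic.card_pow_eq_one_le hb
  have hsub : (Subgroup.zpowers b : Set α).toFinset ⊆ ({x : α | x ^ orderOf b = 1} : Finset α) := by
    intro x hx
    rw [Set.mem_toFinset] at hx
    simp only [Finset.mem_filter, Finset.mem_univ, true_and]
    exact orderOf_dvd_iff_pow_eq_one.mp (orderOf_dvd_of_mem_zpowers hx)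
  have hcardz : (Subgroup.zpowers b : Set α).toFinset.card = orderOf b := by
    rw [Set.toFinset_card, ← Nat.card_eq_fintype_card]
    simp only [SetLike.coe_sort_coe]
    exact Nat.card_zpowers b
  have heq := Finset.eq_of_subset_of_card_le hsub (by omega)
  have ha : a ∈ ({x : α | x ^ orderOf b = 1} : Finset α) := by
    simp only [Finset.mem_filter, Finset.mem_univ, true_and]
    exact orderOf_dvd_iff_pow_eq_one.mp h
  rw [← heq, Set.mem_toFinset] at ha
  exact ha

lemma isCyclic_zpowers {G : Type*} [Group G] (y : G) : IsCyclic (Subgroup.zpowers y) := by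
  refine ⟨⟨y, Subgroup.mem_zpowers y⟩, ?_⟩
  rintro ⟨x, hx⟩
  obtain ⟨k, hk⟩ := Subgroup.mem_zpowers_iff.mp hx
  exact ⟨k, by ext; simp [hk]⟩

/-- Adjacency in the enhanced power graph of a `p`-group. -/
lemma epg_adj_iff {G : Type*} [CommGroup G] [Fintype G] {p : ℕ} (hp : p.Prime)
    (hG : IsPGroup p G) {x y : G} :
    (enhancedPowerGraph G).Adj x y ↔
      x ≠ y ∧ (x ∈ zpowers y ∨ y ∈ zpowers x) := by
  haveI : Fact p.Prime := ⟨hp⟩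
  constructor
  · rintro ⟨hne, hcyc⟩
    refine ⟨hne, ?_⟩
    set H := Subgroup.closure ({x, y} : Set G) with hH
    have hx : x ∈ H := Subgroup.subset_closure (by simp)
    have hy : y ∈ H := Subgroup.subset_closure (by simp)
    haveI : IsCyclic H := hcyc
    obtain ⟨a, ha⟩ := (IsPGroup.iff_orderOf.mp hG) x
    obtain ⟨b, hb⟩ := (IsPGroup.iff_orderOf.mp hG) y
    have key : ∀ u v : G, ∀ hu : u ∈ H, ∀ hv : v ∈ H,
        orderOf u ∣ orderOf v → u ∈ zpowers v := by
      intro u v hu hv hdvd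
      have : (⟨u, hu⟩ : H) ∈ zpowers (⟨v, hv⟩ : H) := by
        apply mem_zpowers_of_orderOf_dvd
        rwa [Subgroup.orderOf_mk, Subgroup.orderOf_mk]
      obtain ⟨k, hk⟩ := Subgroup.mem_zpowers_iff.mp this
      exact ⟨k, by simpa using congrArg Subtype.val hk⟩
    rcases le_total a b with hab | hab
    · exact Or.inl (key x y hx hy (by rw [ha, hb]; exact pow_dvd_pow p hab))
    · exact Or.inr (key y x hy hx (by rw [ha, hb]; exact pow_dvd_pow p hab))
  · rintro ⟨hne, h | h⟩
    · refine ⟨hne, ?_⟩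
      have : Subgroup.closure ({x, y} : Set G) = zpowers y := by
        apply le_antisymm
        · apply (Subgroup.closure_le _).mpr
          intro z hz
          rcases Set.mem_insert_iff.mp hz with hz | hz
          · rw [hz]; exact h
          · rw [Set.mem_singleton_iff.mp hz]; exact Subgroup.mem_zpowers y
        · exact Subgroup.zpowers_le.mpr (Subgroup.subset_closure (by simp))
      rw [this]
      exact _root_.isCyclic_zpowers y
    · refine ⟨hne, ?_⟩
      have : Subgroup.closure ({x, y} : Set G) = zpowers x := by
        apply le_antisymm
        · apply (Subgroup.closure_le _).mpr
          intro z hz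
          rcases Set.mem_insert_iff.mp hz with hz | hz
          · rw [hz]; exact Subgroup.mem_zpowers x
          · rw [Set.mem_singleton_iff.mp hz]; exact h
        · exact Subgroup.zpowers_le.mpr (Subgroup.subset_closure (by simp))
      rw [this]
      exact _root_.isCyclic_zpowers x

open Subgroup

/-- Every pair of vertices of the enhanced power graph is joined by a walk of length ≤ 2. -/
lemma epg_walk_le_two {G : Type*} [CommGroup G] [Fintype G] {p : ℕ} (hp : p.Prime)
    (hG : IsPGroup p G) (z x : G) :
    ∃ w : (enhancedPowerGraph G).Walk z x, w.length ≤ 2 := by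
  by_cases hzx : z = x
  · subst hzx; exact ⟨SimpleGraph.Walk.nil, by simp⟩
  by_cases hadj : (enhancedPowerGraph G).Adj z x
  · exact ⟨hadj.toWalk, by simp⟩
  have hz1 : z ≠ 1 := by
    rintro rfl
    exact hadj ((epg_adj_iff hp hG).mpr ⟨hzx, Or.inl (one_mem _)⟩)
  have hx1 : x ≠ 1 := by
    rintro rfl
    exact hadj ((epg_adj_iff hp hG).mpr ⟨hzx, Or.inr (one_mem _)⟩)
  have h1 : (enhancedPowerGraph G).Adj z 1 := (epg_adj_iff hp hG).mpr ⟨hz1, Or.inr (one_mem _)⟩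
  have h2 : (enhancedPowerGraph G).Adj 1 x := (epg_adj_iff hp hG).mpr ⟨(Ne.symm hx1), Or.inl (one_mem _)⟩
  exact ⟨SimpleGraph.Walk.cons h1 h2.toWalk, by simp⟩

lemma epg_dist_le_two {G : Type*} [CommGroup G] [Fintype G] {p : ℕ} (hp : p.Prime)
    (hG : IsPGroup p G) (z x : G) : (enhancedPowerGraph G).dist z x ≤ 2 := by
  obtain ⟨w, hw⟩ := epg_walk_le_two hp hG z x
  exact le_trans (SimpleGraph.dist_le w) hw

lemma epg_reachable {G : Type*} [CommGroup G] [Fintype G] {p : ℕ} (hp : p.Prime)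
    (hG : IsPGroup p G) (z x : G) : (enhancedPowerGraph G).Reachable z x := by
  obtain ⟨w, _⟩ := epg_walk_le_two hp hG z x
  exact ⟨w⟩

/-- If a shortest walk from `z` to `x` passes through an interior vertex `y`,
in a graph of diameter ≤ 2, then `z ~ y ~ x` and `z ≁ x`. -/
lemma walk_mid {V : Type*} {Γ : SimpleGraph V} {z x y : V} (hyz : y ≠ z) (hyx : y ≠ x)
    (hd : Γ.dist z x ≤ 2) (w : Γ.Walk z x) (hl : w.length = Γ.dist z x) (hy : y ∈ w.support) :
    Γ.Adj z y ∧ Γ.Adj y x ∧ ¬Γ.Adj z x := by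
  cases w with
  | nil =>
    simp only [SimpleGraph.Walk.support_nil, List.mem_singleton] at hy
    exact absurd hy hyz
  | cons h q =>
    cases q with
    | nil =>
      simp only [SimpleGraph.Walk.support_cons, SimpleGraph.Walk.support_nil,
        List.mem_cons, List.mem_singleton, List.not_mem_nil, or_false] at hy
      rcases hy with hy | hy
      · exact absurd hy hyz
      · exact absurd hy hyx
    | cons h' q' =>
      cases q' with
      | nil =>
        simp only [SimpleGraph.Walk.support_cons, SimpleGraph.Walk.support_nil,
          List.mem_cons, List.mem_singleton, List.not_mem_nil, or_false] at hy
        have hd2 : Γ.dist z x = 2 := by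
          rw [← hl]; simp
        rcases hy with hy | hy | hy
        · exact absurd hy hyz
        · subst hy
          refine ⟨h, h', ?_⟩
          intro hadj
          rw [SimpleGraph.dist_eq_one_iff_adj.mpr hadj] at hd2
          omega
        · exact absurd hy hyx
      | cons h'' q'' =>
        exfalso
        simp only [SimpleGraph.Walk.length_cons] at hl
        omega

lemma strongResolves_cases {V : Type*} {Γ : SimpleGraph V} {z x y : V}
    (hzx : z ≠ x) (hzy : z ≠ y) (hxy : x ≠ y)
    (hd1 : Γ.dist z x ≤ 2) (hd2 : Γ.dist z y ≤ 2)
    (h : StronglyResolves Γ z x y) :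
    (Γ.Adj z y ∧ Γ.Adj y x ∧ ¬Γ.Adj z x) ∨ (Γ.Adj z x ∧ Γ.Adj x y ∧ ¬Γ.Adj z y) := by
  rcases h with ⟨w, _, hl, hy⟩ | ⟨w, _, hl, hx⟩
  · exact Or.inl (walk_mid (Ne.symm hzy) hxy.symm hd1 w hl hy)
  · exact Or.inr (walk_mid (Ne.symm hzx) hxy hd2 w hl hx)
/-- In a non-cyclic abelian `p`-group, for `g` of maximal order there is an element
of order `p` outside `⟨g⟩`. -/
lemma exists_order_p_not_mem {G : Type*} [CommGroup G] [Fintype G] {p m : ℕ} (hp : p.Prime)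
    (hG : IsPGroup p G) (hnc : ¬IsCyclic G) (hexp : Monoid.exponent G = p ^ (m + 1))
    {g : G} (hg : orderOf g = p ^ (m + 1)) :
    ∃ t : G, orderOf t = p ∧ t ∉ Subgroup.zpowers g := by
  classical
  haveI : Fact p.Prime := ⟨hp⟩
  have hne : (Finset.univ.filter (fun h : G => h ∉ Subgroup.zpowers g)).Nonempty := by
    by_contra hcon
    rw [Finset.not_nonempty_iff_eq_empty, Finset.filter_eq_empty_iff] at hcon
    refine hnc ⟨g, fun x => ?_⟩
    have := hcon (Finset.mem_univ x)
    exact not_not.mp this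
  obtain ⟨h, hhmem, hmin⟩ := Finset.exists_min_image _ orderOf hne
  rw [Finset.mem_filter] at hhmem
  have hh : h ∉ Subgroup.zpowers g := hhmem.2
  have hh1 : h ≠ 1 := fun e => hh (e ▸ one_mem _)
  obtain ⟨k, hk⟩ := (IsPGroup.iff_orderOf.mp hG) h
  have hk1 : 1 ≤ k := by
    rcases Nat.eq_zero_or_pos k with rfl | h'
    · exfalso; apply hh1; rw [← orderOf_eq_one_iff, hk, pow_zero]
    · exact h'
  have hdvd : p ∣ orderOf h := by
    rw [hk]; exact dvd_pow_self p (by omega)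
  have hord_hp : orderOf (h ^ p) = p ^ (k - 1) := by
    rw [orderOf_pow_of_dvd hp.ne_zero hdvd, hk]
    rw [show (p : ℕ) ^ k / p = p ^ k / p ^ 1 by rw [pow_one], Nat.pow_div hk1 hp.pos]
  -- h^p must be in ⟨g⟩, by minimality of the order of h
  have hpg : h ^ p ∈ Subgroup.zpowers g := by
    by_contra hcon
    have hmem' : h ^ p ∈ Finset.univ.filter (fun h : G => h ∉ Subgroup.zpowers g) := by
      simp [hcon]
    have hle := hmin _ hmem'
    rw [hord_hp, hk] at hle
    exact absurd hle (not_le.mpr (Nat.pow_lt_pow_right hp.one_lt (by omega)))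
  obtain ⟨s, hs'⟩ : h ^ p ∈ Submonoid.powers g := mem_powers_iff_mem_zpowers.mpr hpg
  have hs : g ^ s = h ^ p := hs'
  have hkm : k ≤ m + 1 := by
    have : p ^ k ∣ p ^ (m + 1) := by
      rw [← hk, ← hexp]; exact Monoid.order_dvd_exponent h
    exact (Nat.pow_dvd_pow_iff_le_right hp.one_lt).mp this
  have h1 : (h ^ p) ^ (p ^ m) = 1 := by
    rw [← pow_mul, show p * p ^ m = p ^ (m + 1) from (pow_succ' p m).symm]
    apply orderOf_dvd_iff_pow_eq_one.mp
    rw [hk]; exact pow_dvd_pow p hkm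
  have h2 : g ^ (s * p ^ m) = 1 := by rw [pow_mul, hs]; exact h1
  have h3 : p ^ (m + 1) ∣ s * p ^ m := by rw [← hg]; exact orderOf_dvd_of_pow_eq_one h2
  have h4 : p ∣ s := by
    have hmul : p ^ m * p ∣ p ^ m * s := by
      rw [← pow_succ]
      rwa [mul_comm s (p ^ m)] at h3
    exact (mul_dvd_mul_iff_left (pow_ne_zero m hp.ne_zero)).mp hmul
  obtain ⟨u, hu⟩ := h4
  have hgup : (g ^ u) ^ p = h ^ p := by
    rw [← pow_mul, mul_comm u p, ← hu, hs]
  refine ⟨h * (g ^ u)⁻¹, ?_, ?_⟩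
  · have ht1 : (h * (g ^ u)⁻¹) ^ p = 1 := by
      rw [mul_pow, inv_pow, hgup]
      simp
    have htne : h * (g ^ u)⁻¹ ≠ 1 := by
      intro e
      apply hh
      rw [mul_inv_eq_one] at e
      rw [e]
      exact pow_mem (Subgroup.mem_zpowers g) u
    have hdvd' : orderOf (h * (g ^ u)⁻¹) ∣ p := orderOf_dvd_of_pow_eq_one ht1
    rcases (Nat.Prime.eq_one_or_self_of_dvd hp _ hdvd') with h' | h'
    · exact absurd (orderOf_eq_one_iff.mp h') htne
    · exact h'
  · intro hmem
    apply hh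
    have : h = h * (g ^ u)⁻¹ * g ^ u := by group
    rw [this]
    exact mul_mem hmem (pow_mem (Subgroup.mem_zpowers g) u)
/-- Proposition 4.8: for a non-cyclic abelian `p`-group of order `n` and exponent `p^m`,
`sdim(𝒫_E(G)) = n - m - 1`. -/
theorem sdim_enhancedPowerGraph_abelian_pGroup (G : Type*) [CommGroup G] [Fintype G]
    (p m : ℕ) (hp : p.Prime) (hG : IsPGroup p G) (hnc : ¬IsCyclic G)
    (hexp : Monoid.exponent G = p ^ m) :
    sdim (enhancedPowerGraph G) = Fintype.card G - m - 1 := by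
  classical
  haveI : Fact p.Prime := ⟨hp⟩
  obtain ⟨m', rfl⟩ : ∃ m', m = m' + 1 := by
    rcases Nat.eq_zero_or_pos m with rfl | hm
    · exfalso
      rw [pow_zero] at hexp
      haveI := Monoid.exp_eq_one_iff.mp hexp
      exact hnc inferInstance
    · exact ⟨m - 1, by omega⟩
  obtain ⟨g, hg⟩ : ∃ g : G, orderOf g = p ^ (m' + 1) := by
    obtain ⟨g, hg⟩ := Monoid.exists_orderOf_eq_exponent (Monoid.ExponentExists.of_finite (G := G))
    exact ⟨g, by rw [hg, hexp]⟩
  obtain ⟨t, htp, htg⟩ := exists_order_p_not_mem hp hG hnc hexp hg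
  have hordpow : ∀ i, i ≤ m' + 1 → orderOf (g ^ p ^ i) = p ^ (m' + 1 - i) := by
    intro i hi
    rw [orderOf_pow_of_dvd (pow_ne_zero i hp.ne_zero) (by rw [hg]; exact pow_dvd_pow p hi), hg,
      Nat.pow_div hi hp.pos]
  set T : Finset G := (Finset.range (m' + 2)).image (fun i => g ^ p ^ i) with hTdef
  have hTcard : T.card = m' + 2 := by
    rw [hTdef, Finset.card_image_of_injOn, Finset.card_range]
    intro i hi j hj hij
    simp only [Finset.coe_range, Set.mem_Iio] at hi hj
    have h1 := congrArg orderOf hij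
    rw [hordpow i (by omega), hordpow j (by omega)] at h1
    have := Nat.pow_right_injective hp.two_le h1
    omega
  set S : Finset G := Finset.univ \ T with hSdef
  have hScard : S.card = Fintype.card G - (m' + 2) := by
    rw [hSdef, Finset.card_sdiff_of_subset (Finset.subset_univ T), Finset.card_univ, hTcard]
  -- the key construction
  have claim : ∀ i j : ℕ, j < i → i ≤ m' + 1 →
      ∃ z ∈ S, ∃ w : (enhancedPowerGraph G).Walk z (g ^ p ^ j), w.IsPath ∧
        w.length = (enhancedPowerGraph G).dist z (g ^ p ^ j) ∧ (g ^ p ^ i) ∈ w.support := by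
    intro i j hji him
    obtain ⟨i', rfl⟩ : ∃ i', i = i' + 1 := ⟨i - 1, by omega⟩
    have hji' : j ≤ i' := by omega
    have hi'm : i' ≤ m' := by omega
    set z : G := g ^ p ^ i' * t with hzdef
    have hzg : z ∉ Subgroup.zpowers g := by
      intro hz
      apply htg
      have ht' : t = (g ^ p ^ i')⁻¹ * z := by rw [hzdef]; group
      rw [ht']
      exact mul_mem (inv_mem (pow_mem (Subgroup.mem_zpowers g) _)) hz
    have hag : g ^ p ^ (i' + 1) ∈ Subgroup.zpowers g := pow_mem (Subgroup.mem_zpowers g) _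
    have hbg : g ^ p ^ j ∈ Subgroup.zpowers g := pow_mem (Subgroup.mem_zpowers g) _
    have hza : z ≠ g ^ p ^ (i' + 1) := fun e => hzg (e ▸ hag)
    have hzb : z ≠ g ^ p ^ j := fun e => hzg (e ▸ hbg)
    have hab : g ^ p ^ (i' + 1) ≠ g ^ p ^ j := by
      intro e
      have h1 := congrArg orderOf e
      rw [hordpow _ him, hordpow j (by omega)] at h1
      have := Nat.pow_right_injective hp.two_le h1
      omega
    have ht1 : t ^ p = 1 := by rw [← htp]; exact pow_orderOf_eq_one t
    have hzp : z ^ p = g ^ p ^ (i' + 1) := by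
      rw [hzdef, mul_pow, ht1, mul_one, ← pow_mul, pow_succ]
    have hadj_za : (enhancedPowerGraph G).Adj z (g ^ p ^ (i' + 1)) :=
      (epg_adj_iff hp hG).mpr ⟨hza, Or.inr (hzp ▸ pow_mem (Subgroup.mem_zpowers z) p)⟩
    have hadj_ab : (enhancedPowerGraph G).Adj (g ^ p ^ (i' + 1)) (g ^ p ^ j) := by
      refine (epg_adj_iff hp hG).mpr ⟨hab, Or.inl ?_⟩
      have hba : (g ^ p ^ j) ^ p ^ (i' + 1 - j) = g ^ p ^ (i' + 1) := by
        rw [← pow_mul, ← pow_add, show j + (i' + 1 - j) = i' + 1 by omega]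
      exact hba ▸ pow_mem (Subgroup.mem_zpowers (g ^ p ^ j)) _
    have hordb : orderOf (g ^ p ^ j) = p ^ (m' + 1 - j) := hordpow j (by omega)
    have hnadj_zb : ¬ (enhancedPowerGraph G).Adj z (g ^ p ^ j) := by
      intro hadj
      rcases ((epg_adj_iff hp hG).mp hadj).2 with hmem | hmem
      · exact hzg (Subgroup.zpowers_le.mpr hbg hmem)
      · have e1 : g ^ (p ^ i' * p ^ (m' + 1 - i')) = 1 := by
          rw [← pow_add, show i' + (m' + 1 - i') = m' + 1 by omega, ← hg]
          exact pow_orderOf_eq_one g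
        have e2 : t ^ p ^ (m' + 1 - i') = 1 := by
          apply orderOf_dvd_iff_pow_eq_one.mp
          rw [htp]; exact dvd_pow_self p (by omega)
        have hzpow : z ^ p ^ (m' + 1 - i') = 1 := by
          rw [hzdef, mul_pow, ← pow_mul, e1, e2, one_mul]
        have hzord : orderOf z ∣ p ^ (m' + 1 - i') := orderOf_dvd_of_pow_eq_one hzpow
        have hdvd1 : orderOf (g ^ p ^ j) ∣ p ^ (m' + 1 - i') :=
          dvd_trans (orderOf_dvd_of_mem_zpowers hmem) hzord
        rw [hordb] at hdvd1
        have hle := (Nat.pow_dvd_pow_iff_le_right hp.one_lt).mp hdvd1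
        have heq : m' + 1 - j = m' + 1 - i' := by omega
        have hzb' : orderOf z ∣ orderOf (g ^ p ^ j) := by rw [hordb, heq]; exact hzord
        have hordeq : orderOf z = orderOf (g ^ p ^ j) :=
          Nat.dvd_antisymm hzb' (orderOf_dvd_of_mem_zpowers hmem)
        have hle2 : Subgroup.zpowers (g ^ p ^ j) ≤ Subgroup.zpowers z :=
          Subgroup.zpowers_le.mpr hmem
        have heq2 : Subgroup.zpowers (g ^ p ^ j) = Subgroup.zpowers z :=
          Subgroup.eq_of_le_of_card_ge hle2
            (by rw [Nat.card_zpowers, Nat.card_zpowers, hordeq])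
        have hz_in_b : z ∈ Subgroup.zpowers (g ^ p ^ j) := by
          rw [heq2]; exact Subgroup.mem_zpowers z
        exact hzg (Subgroup.zpowers_le.mpr hbg hz_in_b)
    have hzT : z ∉ T := by
      intro hzT
      obtain ⟨iT, _, hiT⟩ := Finset.mem_image.mp hzT
      exact hzg (hiT ▸ pow_mem (Subgroup.mem_zpowers g) _)
    have hzS : z ∈ S := Finset.mem_sdiff.mpr ⟨Finset.mem_univ z, hzT⟩
    refine ⟨z, hzS, SimpleGraph.Walk.cons hadj_za hadj_ab.toWalk, ?_, ?_, ?_⟩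
    · rw [SimpleGraph.Walk.isPath_def]
      simp [hza, hzb, hab]
    · have hle' : (enhancedPowerGraph G).dist z (g ^ p ^ j) ≤ 2 := by
        have := SimpleGraph.dist_le (SimpleGraph.Walk.cons hadj_za hadj_ab.toWalk)
        simpa using this
      have h0 : (enhancedPowerGraph G).dist z (g ^ p ^ j) ≠ 0 := by
        rw [Ne, SimpleGraph.Reachable.dist_eq_zero_iff ⟨SimpleGraph.Walk.cons hadj_za hadj_ab.toWalk⟩]
        exact hzb
      have h1 : (enhancedPowerGraph G).dist z (g ^ p ^ j) ≠ 1 := fun e =>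
        hnadj_zb (SimpleGraph.dist_eq_one_iff_adj.mp e)
      simp only [SimpleGraph.Walk.length_cons, SimpleGraph.Adj.toWalk,
        SimpleGraph.Walk.length_nil]
      omega
    · simp
  -- membership : S is a strong resolving set
  have hSRS : IsStrongResolvingSet (enhancedPowerGraph G) ↑S := by
    intro x y hxy
    by_cases hxS : x ∈ S
    · refine ⟨x, Finset.mem_coe.mpr hxS, Or.inr ?_⟩
      obtain ⟨w, hw, hl⟩ := (epg_reachable hp hG x y).exists_path_of_dist
      exact ⟨w, hw, hl, SimpleGraph.Walk.start_mem_support w⟩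
    by_cases hyS : y ∈ S
    · refine ⟨y, Finset.mem_coe.mpr hyS, Or.inl ?_⟩
      obtain ⟨w, hw, hl⟩ := (epg_reachable hp hG y x).exists_path_of_dist
      exact ⟨w, hw, hl, SimpleGraph.Walk.start_mem_support w⟩
    have hxT : x ∈ T := by
      by_contra hxT
      exact hxS (Finset.mem_sdiff.mpr ⟨Finset.mem_univ x, hxT⟩)
    have hyT : y ∈ T := by
      by_contra hyT
      exact hyS (Finset.mem_sdiff.mpr ⟨Finset.mem_univ y, hyT⟩)
    obtain ⟨i, hi, rfl⟩ := Finset.mem_image.mp hxT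
    obtain ⟨j, hj, rfl⟩ := Finset.mem_image.mp hyT
    rw [Finset.mem_range] at hi hj
    rcases Nat.lt_or_ge j i with hlt | hge
    · obtain ⟨z, hzS, w, hw1, hw2, hw3⟩ := claim i j hlt (by omega)
      exact ⟨z, Finset.mem_coe.mpr hzS, Or.inr ⟨w, hw1, hw2, hw3⟩⟩
    · have hij : i ≠ j := by rintro rfl; exact hxy rfl
      have hlt : i < j := by omega
      obtain ⟨z, hzS, w, hw1, hw2, hw3⟩ := claim j i hlt (by omega)
      exact ⟨z, Finset.mem_coe.mpr hzS, Or.inl ⟨w, hw1, hw2, hw3⟩⟩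
  -- the lower bound
  have hlb : ∀ k ∈ {k | ∃ S : Finset G, S.card = k ∧
      IsStrongResolvingSet (enhancedPowerGraph G) ↑S}, Fintype.card G - (m' + 2) ≤ k := by
    rintro k ⟨S', hcard, hres⟩
    set T' : Finset G := Finset.univ \ S' with hT'def
    have hinj : Set.InjOn orderOf (↑T' : Set G) := by
      intro a ha b hb hab
      by_contra hne
      obtain ⟨z, hzS', hstrong⟩ := hres a b hne
      rw [Finset.mem_coe] at ha hb
      have haS : a ∉ S' := (Finset.mem_sdiff.mp ha).2
      have hbS : b ∉ S' := (Finset.mem_sdiff.mp hb).2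
      rw [Finset.mem_coe] at hzS'
      have hza : z ≠ a := fun e => haS (e ▸ hzS')
      have hzb : z ≠ b := fun e => hbS (e ▸ hzS')
      have hcases := strongResolves_cases hza hzb hne
        (epg_dist_le_two hp hG z a) (epg_dist_le_two hp hG z b) hstrong
      have hadj_ab : (enhancedPowerGraph G).Adj a b := by
        rcases hcases with ⟨_, h2, _⟩ | ⟨_, h2, _⟩
        · exact h2.symm
        · exact h2
      have hzpeq : Subgroup.zpowers a = Subgroup.zpowers b := by
        rcases ((epg_adj_iff hp hG).mp hadj_ab).2 with hm | hm
        · exact Subgroup.eq_of_le_of_card_ge (Subgroup.zpowers_le.mpr hm)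
            (by rw [Nat.card_zpowers, Nat.card_zpowers, hab])
        · exact (Subgroup.eq_of_le_of_card_ge (Subgroup.zpowers_le.mpr hm)
            (by rw [Nat.card_zpowers, Nat.card_zpowers, hab])).symm
      rcases hcases with ⟨h1, _, h3⟩ | ⟨h1, _, h3⟩
      · apply h3
        refine (epg_adj_iff hp hG).mpr ⟨hza, ?_⟩
        rcases ((epg_adj_iff hp hG).mp h1).2 with hm | hm
        · left; rw [hzpeq]; exact hm
        · right; exact Subgroup.zpowers_le.mpr hm (hzpeq ▸ Subgroup.mem_zpowers a)
      · apply h3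
        refine (epg_adj_iff hp hG).mpr ⟨hzb, ?_⟩
        rcases ((epg_adj_iff hp hG).mp h1).2 with hm | hm
        · left; rw [← hzpeq]; exact hm
        · right; exact Subgroup.zpowers_le.mpr hm (hzpeq ▸ Subgroup.mem_zpowers b)
    have hmapsto : ∀ a ∈ T', orderOf a ∈ (p ^ (m' + 1)).divisors := by
      intro a _
      rw [Nat.mem_divisors]
      exact ⟨hexp ▸ Monoid.order_dvd_exponent a, pow_ne_zero _ hp.ne_zero⟩
    have hcardT : T'.card ≤ m' + 2 := by
      have := Finset.card_le_card_of_injOn orderOf hmapsto hinj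
      rwa [Nat.divisors_prime_pow hp, Finset.card_map, Finset.card_range] at this
    have hT'card : T'.card = Fintype.card G - S'.card := by
      rw [hT'def, Finset.card_sdiff_of_subset (Finset.subset_univ _), Finset.card_univ]
    have hSle : S'.card ≤ Fintype.card G := Finset.card_le_univ _
    omega
  have hmem : Fintype.card G - (m' + 2) ∈ {k | ∃ S : Finset G, S.card = k ∧
      IsStrongResolvingSet (enhancedPowerGraph G) ↑S} := ⟨S, hScard, hSRS⟩
  have hfinal : sdim (enhancedPowerGraph G) = Fintype.card G - (m' + 2) :=
    le_antisymm (Nat.sInf_le hmem) (le_csInf ⟨_, hmem⟩ hlb)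
  rw [hfinal]
  omega
end

section
/- Let G be a finite group. Then every maximal clique of the reduced graph ℛ_{𝒫_E(G)} of the enhanced power graph of G is a subset of some maximal cyclic subgroup of G. -/
section Helpers
open Subgroup

lemma nat_div_dvd_div' {a b N : ℕ} (hab : a ∣ b) (hbN : b ∣ N) (hN : N ≠ 0) :
    N / b ∣ N / a := by
  obtain ⟨c, rfl⟩ := hab
  obtain ⟨d, rfl⟩ := hbN
  have ha : 0 < a := by by_contra h; push_neg at h; interval_cases a <;> simp_all
  have hc : 0 < c := by by_contra h; push_neg at h; interval_cases c <;> simp_all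
  rw [Nat.mul_div_cancel_left _ (by positivity), mul_assoc,
    Nat.mul_div_cancel_left _ ha]
  exact dvd_mul_left d c

lemma mem_zpowers_of_orderOf_dvd' {G : Type*} [Group G] [Finite G] {w x y : G}
    (hx : x ∈ zpowers w) (hy : y ∈ zpowers w) (hd : orderOf x ∣ orderOf y) :
    x ∈ zpowers y := by
  rw [← mem_powers_iff_mem_zpowers] at hx hy
  obtain ⟨i, rfl⟩ := hx
  obtain ⟨j, rfl⟩ := hy
  set N := orderOf w with hNdef
  have hN0 : N ≠ 0 := (orderOf_pos w).ne'
  rw [orderOf_pow, orderOf_pow] at hd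
  have key : N.gcd j ∣ i := by
    have h1 : N / (N / N.gcd j) ∣ N / (N / N.gcd i) :=
      nat_div_dvd_div' hd (Nat.div_dvd_of_dvd (Nat.gcd_dvd_left N j)) hN0
    rw [Nat.div_div_self (Nat.gcd_dvd_left N j) hN0,
      Nat.div_div_self (Nat.gcd_dvd_left N i) hN0] at h1
    exact h1.trans (Nat.gcd_dvd_right N i)
  obtain ⟨t, ht⟩ := key
  refine mem_zpowers_iff.mpr ⟨N.gcdB j * t, ?_⟩
  have hbez : ((N.gcd j : ℤ)) = N * N.gcdA j + j * N.gcdB j := Nat.gcd_eq_gcd_ab N j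
  have hwN : w ^ (N : ℤ) = 1 := by rw [zpow_natCast]; exact pow_orderOf_eq_one w
  have hexp : (j : ℤ) * (N.gcdB j * t) = i - N * (N.gcdA j * t) := by
    have : (i : ℤ) = N.gcd j * t := by exact_mod_cast congrArg Nat.cast ht
    rw [this]; linear_combination (-(t:ℤ)) * hbez
  calc (w ^ j) ^ (N.gcdB j * t) = w ^ ((j:ℤ) * (N.gcdB j * t)) := by
        rw [← zpow_natCast w j, ← zpow_mul]
    _ = w ^ ((i : ℤ) - N * (N.gcdA j * t)) := by rw [hexp]
    _ = w ^ (i:ℤ) * (w ^ ((N:ℤ) * (N.gcdA j * t)))⁻¹ := by rw [zpow_sub]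
    _ = w ^ i := by rw [zpow_mul, hwN, one_zpow, inv_one, mul_one, zpow_natCast]

lemma commute_of_mem_zpowers'' {G : Type*} [Group G] {a b x y : G}
    (hx : x ∈ zpowers a) (hy : y ∈ zpowers b) (h : Commute a b) : Commute x y := by
  obtain ⟨i, rfl⟩ := mem_zpowers_iff.mp hx
  obtain ⟨j, rfl⟩ := mem_zpowers_iff.mp hy
  exact h.zpow_zpow i j


lemma key_clique_cyclic {G : Type*} [Group G] [Finite G] :
    ∀ n : ℕ, 0 < n → ∀ s : Finset G, (∀ x ∈ s, x ^ n = 1) →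
      (∀ x ∈ s, ∀ y ∈ s, ∃ w : G, x ∈ zpowers w ∧ y ∈ zpowers w) →
      ∃ w : G, (∀ x ∈ s, x ∈ zpowers w) ∧ w ^ n = 1 ∧
        (∀ c : G, (∀ x ∈ s, Commute x c) → Commute w c) := by
  classical
  intro n
  induction n using Nat.strong_induction_on with
  | _ n ih =>
  intro hn s hord hcom
  rcases s.eq_empty_or_nonempty with rfl | hne
  · exact ⟨1, by simp, one_pow n, fun c _ => Commute.one_left c⟩
  rcases eq_or_ne n 1 with rfl | hn1
  · refine ⟨1, fun x hx => ?_, one_pow _, fun c _ => Commute.one_left c⟩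
    have h1 := hord x hx
    rw [pow_one] at h1
    simp [h1]
  obtain ⟨p, hp, hpn⟩ := Nat.exists_prime_and_dvd hn1
  have hn0 : n ≠ 0 := hn.ne'
  set a := n.factorization p with ha
  set P := p ^ a with hPdef
  set m := n / P with hmdef
  have hPm : P * m = n := Nat.ordProj_mul_ordCompl_eq_self n p
  have ha0 : a ≠ 0 := (hp.factorization_pos_of_dvd hn0 hpn).ne'
  have hP1 : 1 < P := Nat.one_lt_pow ha0 hp.one_lt
  have hcop : P.Coprime m := (Nat.coprime_ordCompl hp hn0).pow_left a
  have hm0 : m ≠ 0 := by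
    rintro h
    rw [h, mul_zero] at hPm
    exact hn0 hPm.symm
  obtain ⟨k, -, hk⟩ := Nat.exists_mul_mod_eq_one_of_coprime hcop.symm hP1
  set t := m * k / P with htdef
  have hmk : m * k = P * t + 1 := by
    conv_lhs => rw [← Nat.div_add_mod (m * k) P]
    rw [hk]
  -- p-part and p'-part
  set pp : G → G := fun x => x ^ (m * k) with hppdef
  set qq : G → G := fun x => (x ^ (P * t))⁻¹ with hqqdef
  have hpp_mem : ∀ x : G, pp x ∈ zpowers x := fun x => pow_mem (mem_zpowers x) _
  have hqq_mem : ∀ x : G, qq x ∈ zpowers x := fun x => inv_mem (pow_mem (mem_zpowers x) _)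
  have harith1 : m * k * P = n * k := by rw [← hPm]; ring
  have harith2 : P * t * m = n * t := by rw [← hPm]; ring
  have f1 : ∀ x ∈ s, pp x ^ P = 1 := by
    intro x hx
    have : pp x ^ P = (x ^ n) ^ k := by
      show (x ^ (m * k)) ^ P = (x ^ n) ^ k
      rw [← pow_mul, harith1, pow_mul]
    rw [this, hord x hx, one_pow]
  have f2 : ∀ x ∈ s, qq x ^ m = 1 := by
    intro x hx
    have : qq x ^ m = ((x ^ n) ^ t)⁻¹ := by
      show ((x ^ (P * t))⁻¹) ^ m = ((x ^ n) ^ t)⁻¹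
      rw [inv_pow, ← pow_mul, harith2, pow_mul]
    rw [this, hord x hx, one_pow, inv_one]
  have f3 : ∀ x : G, x = pp x * qq x := by
    intro x
    show x = x ^ (m * k) * (x ^ (P * t))⁻¹
    rw [hmk, pow_succ]
    group
  -- max p-part
  obtain ⟨g, hg, hgmax⟩ := Finset.exists_max_image s (fun x => orderOf (pp x)) hne
  have hchain : ∀ x ∈ s, pp x ∈ zpowers (pp g) := by
    intro x hx
    obtain ⟨w, hxw, hgw⟩ := hcom x hx g hg
    have hdx : orderOf (pp x) ∣ P := orderOf_dvd_of_pow_eq_one (f1 x hx)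
    have hdg : orderOf (pp g) ∣ P := orderOf_dvd_of_pow_eq_one (f1 g hg)
    obtain ⟨i, hi, hix⟩ := (Nat.dvd_prime_pow hp).mp hdx
    obtain ⟨j, hj, hjg⟩ := (Nat.dvd_prime_pow hp).mp hdg
    have hij : i ≤ j := by
      have := hgmax x hx
      rw [hix, hjg] at this
      exact (Nat.pow_le_pow_iff_right hp.one_lt).mp this
    refine mem_zpowers_of_orderOf_dvd' (w := w) ?_ ?_ ?_
    · exact (zpowers_le.mpr hxw) (hpp_mem x)
    · exact (zpowers_le.mpr hgw) (hpp_mem g)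
    · rw [hix, hjg]; exact pow_dvd_pow p hij
  -- recursive call on p'-parts
  have hmlt : m < n := by
    rw [hmdef]
    exact Nat.div_lt_self hn hP1
  obtain ⟨wm, hwm1, hwm2, hwm3⟩ :=
    ih m hmlt (Nat.pos_of_ne_zero hm0) (s.image qq)
      (by
        intro z hz
        obtain ⟨x, hx, rfl⟩ := Finset.mem_image.mp hz
        exact f2 x hx)
      (by
        intro z hz z' hz'
        obtain ⟨x, hx, rfl⟩ := Finset.mem_image.mp hz
        obtain ⟨y, hy, rfl⟩ := Finset.mem_image.mp hz'
        obtain ⟨w, hxw, hyw⟩ := hcom x hx y hy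
        exact ⟨w, (zpowers_le.mpr hxw) (hqq_mem x), (zpowers_le.mpr hyw) (hqq_mem y)⟩)
  set gp := pp g with hgpdef
  have hcomm_xg : ∀ x ∈ s, Commute x g := by
    intro x hx
    obtain ⟨w, hxw, hgw⟩ := hcom x hx g hg
    exact commute_of_mem_zpowers'' hxw hgw (Commute.refl w)
  have hcgw : Commute gp wm := by
    refine (hwm3 gp ?_).symm
    intro z hz
    obtain ⟨x, hx, rfl⟩ := Finset.mem_image.mp hz
    exact commute_of_mem_zpowers'' (hqq_mem x) (hpp_mem g) (hcomm_xg x hx)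
  have hgpP : gp ^ P = 1 := f1 g hg
  refine ⟨gp * wm, ?_, ?_, ?_⟩
  · -- membership
    have hgp_mem_w : gp ∈ zpowers (gp * wm) := by
      have e1 : gp ^ (m * k) = gp := by
        rw [hmk, pow_succ, pow_mul, hgpP, one_pow, one_mul]
      have e2 : wm ^ (m * k) = 1 := by rw [pow_mul, hwm2, one_pow]
      have e3 : (gp * wm) ^ (m * k) = gp := by rw [hcgw.mul_pow, e1, e2, mul_one]
      have h4 := pow_mem (mem_zpowers (gp * wm)) (m * k)
      rw [e3] at h4
      exact h4
    have hwm_mem_w : wm ∈ zpowers (gp * wm) := by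
      rcases eq_or_ne m 1 with hm1 | hm1
      · have : wm = 1 := by rw [hm1, pow_one] at hwm2; exact hwm2
        rw [this]; exact one_mem _
      · have hm2 : 1 < m := by
          have := Nat.pos_of_ne_zero hm0
          omega
        obtain ⟨j, -, hj⟩ := Nat.exists_mul_mod_eq_one_of_coprime hcop hm2
        set u := P * j / m with hudef
        have hPj : P * j = m * u + 1 := by
          conv_lhs => rw [← Nat.div_add_mod (P * j) m]
          rw [hj]
        have e1 : gp ^ (P * j) = 1 := by rw [pow_mul, hgpP, one_pow]
        have e2 : wm ^ (P * j) = wm := by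
          rw [hPj, pow_succ, pow_mul, hwm2, one_pow, one_mul]
        have e3 : (gp * wm) ^ (P * j) = wm := by rw [hcgw.mul_pow, e1, e2, one_mul]
        have h4 := pow_mem (mem_zpowers (gp * wm)) (P * j)
        rw [e3] at h4
        exact h4
    intro x hx
    rw [f3 x]
    refine mul_mem ?_ ?_
    · exact (zpowers_le.mpr hgp_mem_w) (hchain x hx)
    · exact (zpowers_le.mpr hwm_mem_w) (hwm1 (qq x) (Finset.mem_image_of_mem qq hx))
  · -- (gp * wm) ^ n = 1
    rw [hcgw.mul_pow, ← hPm, pow_mul, hgpP, one_pow, one_mul, mul_comm P m, pow_mul,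
      hwm2, one_pow]
  · -- commute
    intro c hc
    refine Commute.mul_left ?_ ?_
    · exact commute_of_mem_zpowers'' (hpp_mem g) (mem_zpowers c) (hc g hg)
    · refine hwm3 c ?_
      intro z hz
      obtain ⟨x, hx, rfl⟩ := Finset.mem_image.mp hz
      exact commute_of_mem_zpowers'' (hqq_mem x) (mem_zpowers c) (hc x hx)

lemma exists_common_zpowers' {G : Type*} [Group G] {x y : G}
    (h : IsCyclic (Subgroup.closure ({x, y} : Set G))) :
    ∃ w : G, x ∈ zpowers w ∧ y ∈ zpowers w := by
  obtain ⟨g, hg⟩ := h.exists_generator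
  have key : ∀ z (_ : z ∈ Subgroup.closure ({x, y} : Set G)), z ∈ zpowers (g : G) := by
    intro z hz
    obtain ⟨k, hk⟩ := mem_zpowers_iff.mp (hg ⟨z, hz⟩)
    exact mem_zpowers_iff.mpr ⟨k, by simpa using congrArg Subtype.val hk⟩
  exact ⟨g, key x (subset_closure (by simp)), key y (subset_closure (by simp))⟩

end Helpers


/-- Lemma 4.2: a maximal clique of the reduced graph `ℛ_{𝒫_E(G)}` (a maximal set of
pairwise adjacent representatives with pairwise distinct closed neighborhoods) is
contained in some maximal cyclic subgroup of `G`. -/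
theorem maximal_reduced_clique_subset_maxCyclic (G : Type*) [Group G] [Fintype G]
    (S : Finset G)
    (hadj : ∀ x ∈ S, ∀ y ∈ S, x ≠ y → (enhancedPowerGraph G).Adj x y)
    (hcls : ∀ x ∈ S, ∀ y ∈ S, x ≠ y →
      closedNbhd (enhancedPowerGraph G) x ≠ closedNbhd (enhancedPowerGraph G) y)
    (hmax : ¬∃ z : G,
      (∀ x ∈ S, closedNbhd (enhancedPowerGraph G) z ≠ closedNbhd (enhancedPowerGraph G) x) ∧
      ∀ x ∈ S, (enhancedPowerGraph G).Adj z x) :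
    ∃ M : Subgroup G, IsMaxCyclic M ∧ (↑S : Set G) ⊆ (M : Set G) := by
  classical
  have hcom : ∀ x ∈ S, ∀ y ∈ S, ∃ w : G,
      x ∈ Subgroup.zpowers w ∧ y ∈ Subgroup.zpowers w := by
    intro x hx y hy
    rcases eq_or_ne x y with rfl | hxy
    · exact ⟨x, Subgroup.mem_zpowers x, Subgroup.mem_zpowers x⟩
    · exact exists_common_zpowers' (hadj x hx y hy hxy).2
  obtain ⟨w, hw, -, -⟩ := key_clique_cyclic (Fintype.card G) Fintype.card_pos S
    (fun x _ => pow_card_eq_one) hcom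
  have hcyc : IsCyclic (Subgroup.zpowers w) := by
    refine ⟨⟨⟨w, Subgroup.mem_zpowers w⟩, ?_⟩⟩
    rintro ⟨x, hx⟩
    obtain ⟨k, hk⟩ := Subgroup.mem_zpowers_iff.mp hx
    exact Subgroup.mem_zpowers_iff.mpr ⟨k, by ext; simp [hk]⟩
  obtain ⟨M, hM, hMmax⟩ := Set.Finite.exists_maximalFor id
    {N : Subgroup G | IsCyclic N ∧ Subgroup.zpowers w ≤ N} (Set.toFinite _)
    ⟨Subgroup.zpowers w, hcyc, le_refl _⟩
  refine ⟨M, ⟨hM.1, fun N hN hMN => ?_⟩, fun x hx => hM.2 (hw x hx)⟩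
  exact le_antisymm hMN (hMmax ⟨hN, hM.2.trans hMN⟩ hMN)
end
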